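/- Let H be a real Hilbert space and let S and A be bounded linear operators on H such that S is self-adjoint and ⟨x, A x⟩ = 0 for every x ∈ H. Let λ > 0 and let f, f_s, f_rev ∈ H satisfy f + f_rev = 2·f_s. If u, v ∈ H satisfy λ·u − S u − A u = f and λ·v − S v = f_s, then ⟨f_s, v⟩ − ⟨f_rev, u⟩ = λ·‖u − v‖² + ⟨u − v, −S(u − v)⟩. -/

import Mathlib

open RealInnerProductSpace

theorem stmt_0 {H : Type*} [NormedAddCommGroup H] [InnerProductSpace ℝ H] [CompleteSpace H]
    (S A : H →L[ℝ] H)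
    (hS : ∀ x y : H, ⟪S x, y⟫ = ⟪x, S y⟫)
    (hA : ∀ x : H, ⟪x, A x⟫ = 0)
    (lam : ℝ) (hlam : 0 < lam)
    (f fs frev u v : H)
    (hf : f + frev = (2 : ℝ) • fs)
    (hu : lam • u - S u - A u = f)
    (hv : lam • v - S v = fs) :
    ⟪fs, v⟫ - ⟪frev, u⟫ = lam * ‖u - v‖ ^ 2 + ⟪u - v, -(S (u - v))⟫ := by
  have hfrev : frev = (2 : ℝ) • fs - f := by rw [← hf]; abel
  have hAu : ⟪A u, u⟫ = 0 := by rw [real_inner_comm]; exact hA u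
  subst hfrev hu hv
  simp only [map_sub, map_smul, inner_sub_left, inner_sub_right, inner_add_left,
    inner_add_right, inner_smul_left, inner_smul_right, inner_neg_right,
    real_inner_self_eq_norm_sq, hAu]
  simp only [conj_trivial]
  rw [hS v u, show (inner ℝ u (S v) : ℝ) = inner ℝ v (S u) from by rw [← hS u v, real_inner_comm], hS v v, @norm_sub_sq_real, real_inner_comm u v, hS u u]
  ring
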